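/- Let A be a pca and define a ∼_e b iff a·x ≃ b·x for all x ∈ A. Then the quotient numbering γ_e : A → A/∼_e is precomplete: for every b ∈ A there exists a total element f ∈ A such that for all a ∈ A, if b·a is defined then f·a ∼_e b·a. -/
import Mathlib


/-- A partial combinatory algebra: a partial binary application together with
combinators `k` and `s` satisfying the usual laws. -/
structure PCA (A : Type) where
  app : A → A → Part A
  k : A
  s : A
  k_def : ∀ a : A, (app k a).Dom
  k_eq : ∀ a b : A, (app k a).bind (fun u => app u b) = Part.some a
  s_def : ∀ a : A, (app s a).Dom
  s_def2 : ∀ a b : A, ((app s a).bind fun u => app u b).Dom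
  s_eq : ∀ a b c : A,
    (((app s a).bind fun u => app u b).bind fun u => app u c) =
      (app a c).bind fun u => (app b c).bind fun v => app u v

/-- Extension of a relation on `A` to partial values: either both are
undefined, or both are defined with related values. -/
def PartRel {A : Type} (r : A → A → Prop) (x y : Part A) : Prop :=
  (¬ x.Dom ∧ ¬ y.Dom) ∨ (∃ a ∈ x, ∃ b ∈ y, r a b)

/-- The equivalence `a ∼ₑ b` iff `a·x ≃ b·x` for all `x`. -/
def simEq {A : Type} (P : PCA A) (a b : A) : Prop :=
  ∀ x : A, P.app a x = P.app b x

namespace Scratch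
variable {A : Type} (P : PCA A)

def kk (a : A) : A := (P.app P.k a).get (P.k_def a)

lemma app_k (a : A) : P.app P.k a = Part.some (kk P a) := (Part.some_get _).symm

lemma app_kk (a b : A) : P.app (kk P a) b = Part.some a := by
  have := P.k_eq a b
  rwa [app_k, Part.bind_some] at this

def ss (a : A) : A := (P.app P.s a).get (P.s_def a)

lemma app_s (a : A) : P.app P.s a = Part.some (ss P a) := (Part.some_get _).symm

def ss2 (a b : A) : A := ((P.app P.s a).bind fun u => P.app u b).get (P.s_def2 a b)

lemma app_ss (a b : A) : P.app (ss P a) b = Part.some (ss2 P a b) := by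
  have h : ((P.app P.s a).bind fun u => P.app u b) = Part.some (ss2 P a b) :=
    (Part.some_get _).symm
  rwa [app_s, Part.bind_some] at h

lemma app_ss2 (a b c : A) :
    P.app (ss2 P a b) c = (P.app a c).bind fun u => (P.app b c).bind fun v => P.app u v := by
  have := P.s_eq a b c
  rw [app_s, Part.bind_some, app_ss, Part.bind_some] at this
  exact this

def ii : A := ss2 P P.k P.k

lemma app_i (x : A) : P.app (ii P) x = Part.some x := by
  rw [ii, app_ss2, app_k, Part.bind_some, Part.bind_some, app_kk]

def ff (b : A) : A :=
  ss2 P (ss2 P (kk P P.s) (ss2 P (ss2 P (kk P P.s) (kk P (kk P b))) P.k)) (kk P (ii P))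

lemma app_ff (b a : A) :
    P.app (ff P b) a = Part.some (ss2 P (ss2 P (kk P b) (kk P a)) (ii P)) := by
  rw [ff]
  simp only [app_ss2, app_kk, app_k, app_s, app_ss, Part.bind_some]

lemma main (b : A) : ∃ f : A, (∀ a : A, (P.app f a).Dom) ∧
    ∀ a : A, (P.app b a).Dom →
      ∃ u ∈ P.app f a, ∃ v ∈ P.app b a, simEq P u v := by
  refine ⟨ff P b, fun a => by rw [app_ff]; trivial, fun a ha => ?_⟩
  set v := (P.app b a).get ha with hv
  have hba : P.app b a = Part.some v := (Part.some_get _).symm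
  refine ⟨_, by rw [app_ff]; exact Part.mem_some _, v, by rw [hba]; exact Part.mem_some _, ?_⟩
  intro x
  simp only [app_ss2, app_i, app_kk, Part.bind_some, hba]

end Scratch

/-- The quotient numbering `γₑ : A → A/∼ₑ` is precomplete: for every `b`
there is a total `f` such that `f·a ∼ₑ b·a` whenever `b·a` is defined. -/
theorem gammaE_precomplete {A : Type} (P : PCA A) :
    ∀ b : A, ∃ f : A, (∀ a : A, (P.app f a).Dom) ∧
      ∀ a : A, (P.app b a).Dom →
        ∃ u ∈ P.app f a, ∃ v ∈ P.app b a, simEq P u v := by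
  exact fun b => Scratch.main P b
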